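/- Let a1, a3 be real, and define g(x,y) = (1+a1*x)*[(x-1)^2 + a3*(x-1)*y - (1+a1)*y^2]. On the open region U = {(x,y) in R^2 : g(x,y) ≠ 0}, the function γ(x,y) = 1/g(x,y) is an integrating factor of the Lotka–Volterra system Q3^LV given by dx/dt = y*(1+a1*x), dy/dt = -x + x^2 + a3*x*y - y^2; that is, ∂/∂x [y*(1+a1*x)/g(x,y)] + ∂/∂y [(-x + x^2 + a3*x*y - y^2)/g(x,y)] = 0 for all (x,y) in U. -/

import Mathlib

/-- On U = {g ≠ 0}, γ = 1/g is an integrating factor of the Lotka–Volterra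
system Q3^LV: dx/dt = y*(1+a1*x), dy/dt = -x + x^2 + a3*x*y - y^2, where
g(x,y) = (1+a1*x)*((x-1)^2 + a3*(x-1)*y - (1+a1)*y^2). -/
theorem stmt_3 (a1 a3 : ℝ)
    (g : ℝ → ℝ → ℝ)
    (hg : ∀ x y : ℝ, g x y =
      (1 + a1*x) * ((x - 1)^2 + a3*(x - 1)*y - (1 + a1)*y^2)) :
    ∀ x y : ℝ, g x y ≠ 0 →
      deriv (fun x' => y*(1 + a1*x') / g x' y) x
        + deriv (fun y' => (-x + x^2 + a3*x*y' - y'^2) / g x y') y = 0 := by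
  intro x y hne
  have hD : (1 + a1*x) * ((x - 1)^2 + a3*(x - 1)*y - (1 + a1)*y^2) ≠ 0 := by
    rw [← hg]; exact hne
  -- first deriv (in x)
  have hA : HasDerivAt (fun x' : ℝ => 1 + a1*x') (0 + a1*1) x :=
    (hasDerivAt_const x (1:ℝ)).add ((hasDerivAt_id x).const_mul a1)
  have hxm : HasDerivAt (fun x' : ℝ => x' - 1) 1 x := (hasDerivAt_id x).sub_const 1
  have hB : HasDerivAt (fun x' : ℝ => (x' - 1)^2 + a3*(x' - 1)*y - (1 + a1)*y^2)
      ((2 * (x-1)^1 * 1 + (a3*1)*y) - 0) x := by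
    exact ((hxm.pow 2).add (((hxm.const_mul a3)).mul_const y)).sub
      (hasDerivAt_const x ((1 + a1)*y^2))
  have hN1 : HasDerivAt (fun x' : ℝ => y*(1 + a1*x')) (y*(0 + a1*1)) x := hA.const_mul y
  have hD1 : HasDerivAt (fun x' : ℝ => (1 + a1*x') * ((x' - 1)^2 + a3*(x' - 1)*y - (1 + a1)*y^2))
      ((0 + a1*1) * ((x - 1)^2 + a3*(x - 1)*y - (1 + a1)*y^2)
        + (1 + a1*x) * ((2 * (x-1)^1 * 1 + (a3*1)*y) - 0)) x := hA.mul hB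
  have hQ1 := (show HasDerivAt (fun x' : ℝ => (y*(1 + a1*x')) / ((1 + a1*x') * ((x' - 1)^2 + a3*(x' - 1)*y - (1 + a1)*y^2))) _ x from hN1.div hD1 hD).deriv
  -- second deriv (in y)
  have hN2 : HasDerivAt (fun y' : ℝ => -x + x^2 + a3*x*y' - y'^2)
      ((0 + (a3*x)*1) - 2 * y^1 * 1) y := by
    have h1 : HasDerivAt (fun y' : ℝ => -x + x^2 + a3*x*y') (0 + (a3*x)*1) y :=
      (hasDerivAt_const y (-x + x^2)).add ((hasDerivAt_id y).const_mul (a3*x))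
    exact h1.sub ((hasDerivAt_id y).pow 2)
  have hym : HasDerivAt (fun y' : ℝ => y') 1 y := hasDerivAt_id y
  have hD2 : HasDerivAt (fun y' : ℝ => (1 + a1*x) * ((x - 1)^2 + a3*(x - 1)*y' - (1 + a1)*y'^2))
      ((1 + a1*x) * ((0 + (a3*(x-1))*1) - (1 + a1)*(2 * y^1 * 1))) y := by
    have hB2 : HasDerivAt (fun y' : ℝ => (x - 1)^2 + a3*(x - 1)*y' - (1 + a1)*y'^2)
        ((0 + (a3*(x-1))*1) - (1 + a1)*(2 * y^1 * 1)) y :=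
      ((hasDerivAt_const y ((x-1)^2)).add (hym.const_mul (a3*(x-1)))).sub
        (((hasDerivAt_id y).pow 2).const_mul (1 + a1))
    exact hB2.const_mul (1 + a1*x)
  have hQ2 := (show HasDerivAt (fun y' : ℝ => (-x + x^2 + a3*x*y' - y'^2) / ((1 + a1*x) * ((x - 1)^2 + a3*(x - 1)*y' - (1 + a1)*y'^2))) _ y from hN2.div hD2 hD).deriv
  have e1 : (fun x' => y*(1 + a1*x') / g x' y)
      = fun x' => (y*(1 + a1*x')) / ((1 + a1*x') * ((x' - 1)^2 + a3*(x' - 1)*y - (1 + a1)*y^2)) := by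
    funext x'; rw [hg]
  have e2 : (fun y' => (-x + x^2 + a3*x*y' - y'^2) / g x y')
      = fun y' => (-x + x^2 + a3*x*y' - y'^2) / ((1 + a1*x) * ((x - 1)^2 + a3*(x - 1)*y' - (1 + a1)*y'^2)) := by
    funext y'; rw [hg]
  rw [e1, e2, hQ1, hQ2]
  field_simp
  ring
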